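/- Let s > 0, N ∈ ℕ, and let g : ℝ^d → ℂ be measurable with |g(ξ)| ≤ C^{n+1} n!^s ⟨ξ⟩^{-n} for some C > 0, all ξ ∈ ℝ^d and all integers 0 ≤ n ≤ N. Then there exists C₁ > 0, depending only on C, d and s but not on N, such that for every multi-index α with |α| + d + 1 ≤ N and every x ∈ ℝ^d, | ∫_{ℝ^d} ξ^α g(ξ) e^{i⟨x,ξ⟩} dξ | ≤ C₁^{|α|+1} α!^s. -/

import Mathlib

open MeasureTheory Real Finset

lemma choose_le_two_pow' (n k : ℕ) : n.choose k ≤ 2 ^ n := by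
  rcases le_or_gt k n with h | h
  · calc n.choose k ≤ ∑ i ∈ range (n+1), n.choose i :=
        Finset.single_le_sum (fun i _ => Nat.zero_le _) (by simp [Nat.lt_succ_of_le h])
      _ = 2 ^ n := Nat.sum_range_choose n
  · simp [Nat.choose_eq_zero_of_lt h]

lemma add_factorial_le (a b : ℕ) : (a + b).factorial ≤ 2 ^ (a + b) * (a.factorial * b.factorial) := by
  have key : (a + b).factorial = (a+b).choose a * a.factorial * b.factorial := by
    rw [← Nat.choose_mul_factorial_mul_factorial (Nat.le_add_right a b)]
    congr 1
    simp [Nat.add_sub_cancel_left]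
  calc (a + b).factorial = (a+b).choose a * a.factorial * b.factorial := key
    _ ≤ 2 ^ (a+b) * a.factorial * b.factorial :=
        Nat.mul_le_mul_right _ (Nat.mul_le_mul_right _ (choose_le_two_pow' (a+b) a))
    _ = 2 ^ (a + b) * (a.factorial * b.factorial) := by ring

lemma sum_factorial_le {ι : Type*} (t : Finset ι) (α : ι → ℕ) :
    (∑ i ∈ t, α i).factorial ≤ (2 ^ t.card) ^ (∑ i ∈ t, α i) * ∏ i ∈ t, (α i).factorial := by
  classical
  induction t using Finset.induction with
  | empty => simp
  | @insert j t' hj ih =>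
    rw [Finset.sum_insert hj, Finset.prod_insert hj, Finset.card_insert_of_notMem hj]
    calc (α j + ∑ i ∈ t', α i).factorial
        ≤ 2 ^ (α j + ∑ i ∈ t', α i) * ((α j).factorial * (∑ i ∈ t', α i).factorial) :=
          add_factorial_le _ _
      _ ≤ 2 ^ (α j + ∑ i ∈ t', α i) * ((α j).factorial *
            ((2 ^ t'.card) ^ (∑ i ∈ t', α i) * ∏ i ∈ t', (α i).factorial)) :=
          Nat.mul_le_mul_left _ (Nat.mul_le_mul_left _ ih)
      _ ≤ 2 ^ (α j + ∑ i ∈ t', α i) * ((α j).factorial *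
            ((2 ^ t'.card) ^ (α j + ∑ i ∈ t', α i) * ∏ i ∈ t', (α i).factorial)) := by
          gcongr
          · exact Nat.one_le_two_pow
          · exact Nat.le_add_left _ _
      _ = (2 * 2 ^ t'.card) ^ (α j + ∑ i ∈ t', α i) *
            ((α j).factorial * ∏ i ∈ t', (α i).factorial) := by
          rw [mul_pow]; ring
      _ = (2 ^ (t'.card + 1)) ^ (α j + ∑ i ∈ t', α i) *
            ((α j).factorial * ∏ i ∈ t', (α i).factorial) := by
          rw [pow_succ, mul_comm (2 ^ t'.card) 2]

lemma factorial_add_le' (k m : ℕ) : (k + m).factorial ≤ k.factorial * (k + m) ^ m := by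
  induction m with
  | zero => simp
  | succ m ih =>
    rw [← Nat.add_assoc, Nat.factorial_succ]
    calc (k + m + 1) * (k + m).factorial ≤ (k + m + 1) * (k.factorial * (k + m) ^ m) :=
          Nat.mul_le_mul_left _ ih
      _ ≤ (k + m + 1) * (k.factorial * (k + m + 1) ^ m) :=
          Nat.mul_le_mul_left _ (Nat.mul_le_mul_left _ (Nat.pow_le_pow_left (Nat.le_succ _) m))
      _ = k.factorial * (k + m + 1) ^ (m + 1) := by ring

lemma key_nat_bound (d k : ℕ) (α : Fin d → ℕ) (hk : k = ∑ i, α i) :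
    (k + d + 1).factorial ≤ (d+1)^(d+1) * (2^(2*d+1))^k * ∏ i, (α i).factorial := by
  have h2 : k + (d + 1) ≤ (d + 1) * 2 ^ k := by
    have hk2 : k + 1 ≤ 2 ^ k := Nat.lt_two_pow_self
    have hd : d ≤ d * 2 ^ k := Nat.le_mul_of_pos_right d (Nat.two_pow_pos k)
    have h3 : (d+1) * 2 ^ k = d * 2 ^ k + 2 ^ k := by ring
    omega
  have hkf : k.factorial ≤ (2 ^ d) ^ k * ∏ i, (α i).factorial := by
    have := sum_factorial_le (Finset.univ : Finset (Fin d)) α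
    simpa [← hk, Finset.card_univ] using this
  calc (k + d + 1).factorial = (k + (d+1)).factorial := by rw [Nat.add_assoc]
    _ ≤ k.factorial * (k + (d+1)) ^ (d+1) := factorial_add_le' k (d+1)
    _ ≤ ((2 ^ d) ^ k * ∏ i, (α i).factorial) * ((d+1) * 2 ^ k) ^ (d+1) := by
        gcongr
    _ = (d+1)^(d+1) * (2 ^ (d*k + k*(d+1))) * ∏ i, (α i).factorial := by
        rw [mul_pow, pow_add, ← pow_mul, ← pow_mul]; ring
    _ = (d+1)^(d+1) * (2^(2*d+1))^k * ∏ i, (α i).factorial := by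
        rw [← pow_mul]; congr 2; ring

lemma real_key (d k : ℕ) (s : ℝ) (hs : 0 < s) (α : Fin d → ℕ) (hk : k = ∑ i, α i) :
    (((k+d+1).factorial : ℕ) : ℝ) ^ s ≤
      ((d+1 : ℝ)^(d+1)) ^ s * (((2:ℝ)^(2*d+1)) ^ s) ^ k * ((∏ i, (α i).factorial : ℕ) : ℝ) ^ s := by
  have h' : (((k+d+1).factorial : ℕ):ℝ) ≤
      (((d+1)^(d+1) * (2^(2*d+1))^k * ∏ i, (α i).factorial : ℕ) : ℝ) := by
    exact_mod_cast key_nat_bound d k α hk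
  calc (((k+d+1).factorial : ℕ) : ℝ) ^ s
      ≤ (((d+1)^(d+1) * (2^(2*d+1))^k * ∏ i, (α i).factorial : ℕ) : ℝ) ^ s :=
        Real.rpow_le_rpow (by positivity) h' hs.le
    _ = ((d+1 : ℝ)^(d+1)) ^ s * (((2:ℝ)^(2*d+1)) ^ s) ^ k * ((∏ i, (α i).factorial : ℕ) : ℝ) ^ s := by
        push_cast
        rw [Real.mul_rpow (by positivity) (by positivity),
          Real.mul_rpow (by positivity) (by positivity)]
        congr 1
        rw [← Real.rpow_natCast ((2:ℝ)^(2*d+1)) k, ← Real.rpow_mul (by positivity),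
          mul_comm (k:ℝ) s, Real.rpow_mul (by positivity), Real.rpow_natCast]

/-- If `|g(ξ)| ≤ C^{n+1} n!^s ⟨ξ⟩^{-n}` for all `n ≤ N`, then for every multi-index `α` with
`|α| + d + 1 ≤ N`, `|∫ ξ^α g(ξ) e^{i⟨x,ξ⟩} dξ| ≤ C₁^{|α|+1} α!^s`, where `C₁` depends only on
`C`, `d`, `s` but not on `N`. -/
theorem moment_integral_gevrey_bound (d : ℕ) (s C : ℝ) (hs : 0 < s) (hC : 0 < C) :
    ∃ C₁ : ℝ, 0 < C₁ ∧
      ∀ (N : ℕ) (g : EuclideanSpace ℝ (Fin d) → ℂ), Measurable g →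
        (∀ n : ℕ, n ≤ N → ∀ ξ : EuclideanSpace ℝ (Fin d),
          ‖g ξ‖ ≤ C ^ (n + 1) * ((n.factorial : ℕ) : ℝ) ^ s * (1 + ‖ξ‖ ^ 2) ^ (-(n : ℝ) / 2)) →
        ∀ α : Fin d → ℕ, (∑ i, α i) + d + 1 ≤ N →
          ∀ x : EuclideanSpace ℝ (Fin d),
            ‖∫ ξ : EuclideanSpace ℝ (Fin d),
                ((∏ i, (ξ i) ^ (α i) : ℝ) : ℂ) * g ξ *
                  Complex.exp (Complex.I * ((inner ℝ x ξ : ℝ) : ℂ))‖ ≤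
              C₁ ^ ((∑ i, α i) + 1) * ((∏ i, (α i).factorial : ℕ) : ℝ) ^ s := by
  set E := EuclideanSpace ℝ (Fin d)
  have hfr : (Module.finrank ℝ E : ℝ) < (d : ℝ) + 1 := by
    simp [E, finrank_euclideanSpace_fin]
  have hIint : Integrable (fun ξ : E => ((1:ℝ) + ‖ξ‖ ^ 2) ^ (-((d:ℝ)+1) / 2)) :=
    integrable_rpow_neg_one_add_norm_sq hfr
  set I : ℝ := ∫ ξ : E, ((1:ℝ) + ‖ξ‖ ^ 2) ^ (-((d:ℝ)+1) / 2) with hI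
  set C' : ℝ := max C 1 with hC'
  set B : ℝ := C' * ((2:ℝ)^(2*d+1)) ^ s with hB
  set A : ℝ := C'^(d+2) * ((d+1 : ℝ)^(d+1)) ^ s * max I 1 with hA
  refine ⟨max A 1 * max B 1, by positivity, ?_⟩
  intro N g hg hgb α hα x
  set k := ∑ i, α i with hk
  set n := k + d + 1 with hn
  set M : ℝ := C ^ (n + 1) * ((n.factorial : ℕ) : ℝ) ^ s with hM
  have hgn := hgb n hα
  -- pointwise bound
  have hcoord : ∀ (ξ : E) (i : Fin d), |ξ i| ≤ ‖ξ‖ := by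
    intro ξ i
    rw [EuclideanSpace.norm_eq, ← Real.sqrt_sq_eq_abs]
    apply Real.sqrt_le_sqrt
    calc (ξ i)^2 = ‖ξ i‖^2 := by rw [Real.norm_eq_abs, sq_abs]
      _ ≤ ∑ j, ‖ξ j‖^2 := Finset.single_le_sum (f := fun j => ‖ξ j‖^2) (fun j _ => sq_nonneg _) (Finset.mem_univ i)
  have hptw : ∀ ξ : E, ‖((∏ i, (ξ i) ^ (α i) : ℝ) : ℂ) * g ξ *
      Complex.exp (Complex.I * ((inner ℝ x ξ : ℝ) : ℂ))‖ ≤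
      M * ((1:ℝ) + ‖ξ‖ ^ 2) ^ (-((d:ℝ)+1) / 2) := by
    intro ξ
    have hbase : (0:ℝ) < 1 + ‖ξ‖ ^ 2 := by positivity
    have hnorm1 : ‖Complex.exp (Complex.I * ((inner ℝ x ξ : ℝ) : ℂ))‖ = 1 := by
      simp [Complex.norm_exp]
    rw [norm_mul, norm_mul, hnorm1, mul_one, Complex.norm_real, Real.norm_eq_abs]
    have h1 : |∏ i, (ξ i) ^ (α i)| ≤ ‖ξ‖ ^ k := by
      rw [Finset.abs_prod]
      calc ∏ i, |(ξ i) ^ (α i)| = ∏ i, |ξ i| ^ (α i) := by simp [abs_pow]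
        _ ≤ ∏ i, ‖ξ‖ ^ (α i) :=
          Finset.prod_le_prod (fun i _ => by positivity)
            (fun i _ => pow_le_pow_left₀ (abs_nonneg _) (hcoord ξ i) _)
        _ = ‖ξ‖ ^ k := by rw [← Finset.prod_pow_eq_pow_sum]
    have h2 : ‖ξ‖ ^ k ≤ (1 + ‖ξ‖ ^ 2) ^ ((k : ℝ) / 2) := by
      have hle : ‖ξ‖ ≤ (1 + ‖ξ‖ ^ 2) ^ ((1:ℝ)/2) := by
        rw [← Real.sqrt_eq_rpow]
        calc ‖ξ‖ = Real.sqrt (‖ξ‖^2) := (Real.sqrt_sq (norm_nonneg _)).symm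
          _ ≤ Real.sqrt (1 + ‖ξ‖^2) := Real.sqrt_le_sqrt (by linarith)
      calc ‖ξ‖ ^ k ≤ ((1 + ‖ξ‖ ^ 2) ^ ((1:ℝ)/2)) ^ k :=
            pow_le_pow_left₀ (norm_nonneg _) hle k
        _ = (1 + ‖ξ‖ ^ 2) ^ ((k : ℝ) / 2) := by
            rw [← Real.rpow_natCast ((1 + ‖ξ‖ ^ 2) ^ ((1:ℝ)/2)) k, ← Real.rpow_mul hbase.le]
            ring_nf
    calc |∏ i, (ξ i) ^ (α i)| * ‖g ξ‖
        ≤ (1 + ‖ξ‖ ^ 2) ^ ((k : ℝ) / 2) *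
            (C ^ (n + 1) * ((n.factorial : ℕ) : ℝ) ^ s * (1 + ‖ξ‖ ^ 2) ^ (-(n : ℝ) / 2)) := by
          apply mul_le_mul (h1.trans h2) (hgn ξ) (norm_nonneg _) (by positivity)
      _ = M * ((1 + ‖ξ‖ ^ 2) ^ ((k : ℝ) / 2) * (1 + ‖ξ‖ ^ 2) ^ (-(n : ℝ) / 2)) := by
          rw [hM]; ring
      _ = M * ((1:ℝ) + ‖ξ‖ ^ 2) ^ (-((d:ℝ)+1) / 2) := by
          rw [← Real.rpow_add hbase]
          congr 1
          rw [hn]; push_cast; ring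
  -- integrability
  have hmeas : AEStronglyMeasurable (fun ξ : E => ((∏ i, (ξ i) ^ (α i) : ℝ) : ℂ) * g ξ *
      Complex.exp (Complex.I * ((inner ℝ x ξ : ℝ) : ℂ))) volume := by
    apply Measurable.aestronglyMeasurable
    apply Measurable.mul
    · apply Measurable.mul _ hg
      apply Complex.measurable_ofReal.comp
      exact Finset.measurable_prod _ fun i _ =>
        ((EuclideanSpace.proj i).continuous.measurable).pow_const _
    · exact (Complex.measurable_exp.comp
        ((measurable_const.mul
          (Complex.measurable_ofReal.comp
            (Continuous.measurable (continuous_const.inner continuous_id)))) ))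
  have hMnn : 0 ≤ M := by positivity
  have hbd_int : Integrable (fun ξ : E => M * ((1:ℝ) + ‖ξ‖ ^ 2) ^ (-((d:ℝ)+1) / 2)) :=
    hIint.const_mul M
  have hf_int : Integrable (fun ξ : E => ((∏ i, (ξ i) ^ (α i) : ℝ) : ℂ) * g ξ *
      Complex.exp (Complex.I * ((inner ℝ x ξ : ℝ) : ℂ))) :=
    hbd_int.mono' hmeas (Filter.Eventually.of_forall hptw)
  -- the integral bound
  have hIbound : ‖∫ ξ : E, ((∏ i, (ξ i) ^ (α i) : ℝ) : ℂ) * g ξ *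
      Complex.exp (Complex.I * ((inner ℝ x ξ : ℝ) : ℂ))‖ ≤ M * I := by
    calc ‖∫ ξ : E, ((∏ i, (ξ i) ^ (α i) : ℝ) : ℂ) * g ξ *
        Complex.exp (Complex.I * ((inner ℝ x ξ : ℝ) : ℂ))‖
        ≤ ∫ ξ : E, ‖((∏ i, (ξ i) ^ (α i) : ℝ) : ℂ) * g ξ *
            Complex.exp (Complex.I * ((inner ℝ x ξ : ℝ) : ℂ))‖ :=
          norm_integral_le_integral_norm _
      _ ≤ ∫ ξ : E, M * ((1:ℝ) + ‖ξ‖ ^ 2) ^ (-((d:ℝ)+1) / 2) :=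
          integral_mono hf_int.norm hbd_int hptw
      _ = M * I := by rw [integral_const_mul]
  -- the constant bound
  have hInn : 0 ≤ I := integral_nonneg fun ξ => by positivity
  have hkey : M * I ≤ (max A 1 * max B 1) ^ (k + 1) * ((∏ i, (α i).factorial : ℕ) : ℝ) ^ s := by
    have hC'1 : (1:ℝ) ≤ C' := le_max_right _ _
    have hC'0 : (0:ℝ) < C' := lt_of_lt_of_le one_pos hC'1
    have hCC' : C ≤ C' := le_max_left _ _
    have hpow : C ^ (n+1) ≤ C'^(d+2) * C'^k := by
      calc C ^ (n+1) ≤ C' ^ (n+1) := pow_le_pow_left₀ hC.le hCC' _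
        _ = C'^(d+2) * C'^k := by rw [← pow_add]; congr 1; omega
    have hMle : M ≤ C'^(d+2) * C'^k * (((n.factorial : ℕ) : ℝ) ^ s) := by
      rw [hM]
      exact mul_le_mul_of_nonneg_right hpow (Real.rpow_nonneg (Nat.cast_nonneg _) _)
    have hfact := real_key d k s hs α hk
    have step1 : M * I ≤ (C'^(d+2) * C'^k *
        (((d+1 : ℝ)^(d+1)) ^ s * (((2:ℝ)^(2*d+1)) ^ s) ^ k *
          ((∏ i, (α i).factorial : ℕ) : ℝ) ^ s)) * max I 1 := by
      have h1 : M ≤ C'^(d+2) * C'^k *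
          (((d+1 : ℝ)^(d+1)) ^ s * (((2:ℝ)^(2*d+1)) ^ s) ^ k *
            ((∏ i, (α i).factorial : ℕ) : ℝ) ^ s) :=
        hMle.trans (mul_le_mul_of_nonneg_left hfact (by positivity))
      have h2 : I ≤ max I 1 := le_max_left _ _
      exact mul_le_mul h1 h2 hInn (by positivity)
    refine step1.trans ?_
    have heq : C'^(d+2) * C'^k *
        (((d+1 : ℝ)^(d+1)) ^ s * (((2:ℝ)^(2*d+1)) ^ s) ^ k *
          ((∏ i, (α i).factorial : ℕ) : ℝ) ^ s) * max I 1
        = (A * B ^ k) * ((∏ i, (α i).factorial : ℕ) : ℝ) ^ s := by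
      rw [hA, hB, mul_pow]; ring
    rw [heq]
    gcongr
    have hA1 : A ≤ max A 1 := le_max_left _ _
    have hB1 : B ≤ max B 1 := le_max_left _ _
    have hBnn : 0 ≤ B := by positivity
    calc A * B ^ k ≤ max A 1 * (max B 1) ^ k := by gcongr
      _ ≤ (max A 1) ^ (k+1) * (max B 1) ^ (k+1) :=
          mul_le_mul (le_self_pow₀ (le_max_right _ _) (Nat.succ_ne_zero k))
            (pow_le_pow_right₀ (le_max_right _ _) (Nat.le_succ k)) (by positivity) (by positivity)
      _ = (max A 1 * max B 1) ^ (k+1) := (mul_pow _ _ _).symm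
  exact hIbound.trans hkey
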